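/- The random variable s(x,ℓ) is 2-Lipschitz as a function of the input sequence: changing the value of a single input point x_i can change the value of s(x,ℓ) by at most 2. -/

import Mathlib

open MeasureTheory ProbabilityTheory Finset

noncomputable section

/-- One step of the forgetting process: the new point `x` joins `S`; if `x` is strictly
larger than the current minimum of `S`, that minimum is removed. -/
def forgetStep (S : Finset ℝ) (x : ℝ) : Finset ℝ :=
  if h : S.Nonempty then
    if S.min' h < x then insert x (S.erase (S.min' h)) else insert x S
  else insert x S

/-- The memory after `n` steps, starting from the set `T`, with inputs `xs 0, xs 1, …`. -/
def forgetMem (T : Finset ℝ) (xs : ℕ → ℝ) : ℕ → Finset ℝ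
  | 0 => T
  | n + 1 => forgetStep (forgetMem T xs n) (xs n)

/-- `sCount xs x ℓ` : number of elements of the memory lying in `[0, x]` after `ℓ` steps,
starting from `S = {0}`. -/
def sCount (xs : ℕ → ℝ) (x : ℝ) (ℓ : ℕ) : ℕ :=
  ((forgetMem {0} xs ℓ).filter (· ≤ x)).card

/-- The branching weight `W(z,n) = Σ_{x ∈ S(z,n)} 1/(1-x)`, the sum over memory elements
strictly below `z` at time `n`. -/
def Wproc (xs : ℕ → ℝ) (z : ℝ) (n : ℕ) : ℝ :=
  ∑ x ∈ (forgetMem {0} xs n).filter (· < z), 1 / (1 - x)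

/-- `Z(z,n) = Σ_{k=1}^n W(z,k)·1{W(z,k-1)=0}`. -/
def Zproc (xs : ℕ → ℝ) (z : ℝ) (n : ℕ) : ℝ :=
  ∑ k ∈ Finset.range n, if Wproc xs z k = 0 then Wproc xs z (k + 1) else 0

/-- `X(z,n) = W(z,n) - Z(z,n)`. -/
def Xproc (xs : ℕ → ℝ) (z : ℝ) (n : ℕ) : ℝ :=
  Wproc xs z n - Zproc xs z n

/-- the minimum of the memory at time `n` (with junk value `0` if the memory were empty). -/
def mminProc (xs : ℕ → ℝ) (n : ℕ) : ℝ :=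
  WithTop.untopD 0 (forgetMem {0} xs n).min

/-- the critical point `z₀ = 1 - 1/e`. -/
def critPoint : ℝ := 1 - (Real.exp 1)⁻¹

/-- The σ-algebra generated by the first `n` inputs `X 0, …, X (n-1)`. -/
def natSigma {Ω : Type*} [MeasurableSpace Ω] (X : ℕ → Ω → ℝ) (n : ℕ) : MeasurableSpace Ω :=
  ⨆ i ∈ Finset.range n, MeasurableSpace.comap (X i) inferInstance

/-- The natural filtration `F_n = σ(x_1, …, x_n)` of the input sequence. -/
def natFilt {Ω : Type*} [m0 : MeasurableSpace Ω] (X : ℕ → Ω → ℝ)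
    (hX : ∀ i, Measurable (X i)) : Filtration ℕ m0 where
  seq n := natSigma X n
  mono' n m hnm := biSup_mono fun i hi => Finset.mem_range.2 ((Finset.mem_range.1 hi).trans_le hnm)
  le' n := iSup₂_le fun i _ => measurable_iff_comap_le.1 (hX i)

/-- The input sequence is i.i.d. uniform on `[0,1]`. -/
def IsUnifIID {Ω : Type*} [MeasurableSpace Ω] (μ : Measure Ω) (X : ℕ → Ω → ℝ) : Prop :=
  (∀ i, Measurable (X i)) ∧
    iIndepFun X μ ∧
    ∀ i, Measure.map (X i) μ = volume.restrict (Set.Icc (0 : ℝ) 1)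

end

section Aux

lemma forgetStep_eq_pos (S : Finset ℝ) (hS : S.Nonempty) (x : ℝ) :
    forgetStep S x
      = if S.min' hS < x then insert x (S.erase (S.min' hS)) else insert x S := by
  unfold forgetStep
  rw [dif_pos hS]

lemma mem_forgetStep (S : Finset ℝ) (x y : ℝ) (hy : y ∈ forgetStep S x) :
    y = x ∨ y ∈ S := by
  unfold forgetStep at hy
  split_ifs at hy <;>
    simp only [Finset.mem_insert, Finset.mem_erase] at hy <;> tauto

lemma forgetStep_nonempty (S : Finset ℝ) (x : ℝ) : (forgetStep S x).Nonempty := by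
  unfold forgetStep
  split_ifs <;> exact Finset.insert_nonempty _ _

lemma forgetMem_zero_nonempty (xs : ℕ → ℝ) (n : ℕ) :
    (forgetMem {0} xs n).Nonempty := by
  cases n with
  | zero => exact ⟨0, by simp [forgetMem]⟩
  | succ n => exact forgetStep_nonempty _ _

/-- One-sided difference cards never grow under a synchronized step. -/
lemma card_sdiff_forgetStep_le (S T : Finset ℝ) (hS : S.Nonempty) (hT : T.Nonempty)
    (x : ℝ) : ((forgetStep S x) \ (forgetStep T x)).card ≤ (S \ T).card := by
  by_cases hTx : T.min' hT < x
  · by_cases hmTS : T.min' hT ∈ S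
    · have hSx : S.min' hS < x := lt_of_le_of_lt (S.min'_le _ hmTS) hTx
      by_cases heq : S.min' hS = T.min' hT
      · apply Finset.card_le_card
        intro y hy
        rw [Finset.mem_sdiff, forgetStep_eq_pos S hS, forgetStep_eq_pos T hT,
          if_pos hSx, if_pos hTx] at hy
        simp only [Finset.mem_insert, Finset.mem_erase, not_or, not_and_or,
          not_not] at hy
        rw [Finset.mem_sdiff]
        rcases hy with ⟨h1, h2, h3⟩
        rcases h1 with rfl | ⟨hne, hyS⟩
        · exact absurd rfl h2
        · refine ⟨hyS, ?_⟩
          rcases h3 with h3 | h3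
          · exact absurd (heq.trans h3.symm).symm hne
          · exact h3
      · have hlt : S.min' hS < T.min' hT := lt_of_le_of_ne (S.min'_le _ hmTS) heq
        have hmSnT : S.min' hS ∉ T := fun h => absurd (T.min'_le _ h) (not_le.mpr hlt)
        have hmSAB : S.min' hS ∈ S \ T :=
          Finset.mem_sdiff.mpr ⟨S.min'_mem hS, hmSnT⟩
        have hpos : 1 ≤ (S \ T).card := Finset.card_pos.mpr ⟨_, hmSAB⟩
        have hsub : (forgetStep S x) \ (forgetStep T x)
            ⊆ insert (T.min' hT) ((S \ T).erase (S.min' hS)) := by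
          intro y hy
          rw [Finset.mem_sdiff, forgetStep_eq_pos S hS, forgetStep_eq_pos T hT,
            if_pos hSx, if_pos hTx] at hy
          simp only [Finset.mem_insert, Finset.mem_erase, not_or, not_and_or,
            not_not] at hy
          simp only [Finset.mem_insert, Finset.mem_erase, Finset.mem_sdiff]
          rcases hy with ⟨h1, h2, h3⟩
          rcases h1 with rfl | ⟨hne, hyS⟩
          · exact absurd rfl h2
          · rcases h3 with h3 | h3
            · exact Or.inl h3
            · exact Or.inr ⟨hne, hyS, h3⟩
        calc ((forgetStep S x) \ (forgetStep T x)).card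
            ≤ (insert (T.min' hT) ((S \ T).erase (S.min' hS))).card :=
              Finset.card_le_card hsub
          _ ≤ ((S \ T).erase (S.min' hS)).card + 1 := Finset.card_insert_le _ _
          _ = (S \ T).card - 1 + 1 := by rw [Finset.card_erase_of_mem hmSAB]
          _ ≤ (S \ T).card := by omega
    · apply Finset.card_le_card
      intro y hy
      rw [Finset.mem_sdiff] at hy
      obtain ⟨h1, h2⟩ := hy
      rw [forgetStep_eq_pos T hT, if_pos hTx] at h2
      simp only [Finset.mem_insert, Finset.mem_erase, not_or, not_and_or,
        not_not] at h2
      have h1' := mem_forgetStep S x y h1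
      rw [Finset.mem_sdiff]
      rcases h1' with rfl | hyS
      · exact absurd rfl h2.1
      · refine ⟨hyS, ?_⟩
        rcases h2.2 with h3 | h3
        · exact absurd (h3 ▸ hyS) hmTS
        · exact h3
  · apply Finset.card_le_card
    intro y hy
    rw [Finset.mem_sdiff] at hy
    obtain ⟨h1, h2⟩ := hy
    rw [forgetStep_eq_pos T hT, if_neg hTx] at h2
    simp only [Finset.mem_insert, not_or] at h2
    have h1' := mem_forgetStep S x y h1
    rw [Finset.mem_sdiff]
    rcases h1' with rfl | hyS
    · exact absurd rfl h2.1
    · exact ⟨hyS, h2.2⟩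

/-- Right after the single differing step, the one-sided difference has at most two
elements (the new point and the possibly-removed minimum). -/
lemma card_sdiff_forgetStep_same_le (S : Finset ℝ) (x x' : ℝ) :
    ((forgetStep S x) \ (forgetStep S x')).card ≤ 2 := by
  by_cases hS : S.Nonempty
  · have hsub : (forgetStep S x) \ (forgetStep S x') ⊆ {x, S.min' hS} := by
      intro y hy
      rw [Finset.mem_sdiff] at hy
      obtain ⟨h1, h2⟩ := hy
      have h1' := mem_forgetStep S x y h1
      rw [forgetStep_eq_pos S hS] at h2
      simp only [Finset.mem_insert, Finset.mem_singleton]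
      rcases h1' with rfl | hyS
      · exact Or.inl rfl
      · right
        by_cases hcase : S.min' hS < x'
        · rw [if_pos hcase] at h2
          simp only [Finset.mem_insert, Finset.mem_erase, not_or, not_and_or,
            not_not] at h2
          rcases h2.2 with h3 | h3
          · exact h3
          · exact absurd hyS h3
        · rw [if_neg hcase] at h2
          simp only [Finset.mem_insert, not_or] at h2
          exact absurd hyS h2.2
    calc ((forgetStep S x) \ (forgetStep S x')).card
        ≤ ({x, S.min' hS} : Finset ℝ).card := Finset.card_le_card hsub
      _ ≤ 2 := Finset.card_le_two
  · have hsub : (forgetStep S x) \ (forgetStep S x') ⊆ {x} := by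
      intro y hy
      rw [Finset.mem_sdiff] at hy
      have h1' := mem_forgetStep S x y hy.1
      simp only [Finset.mem_singleton]
      rcases h1' with rfl | hyS
      · rfl
      · exact absurd ⟨y, hyS⟩ hS
    calc ((forgetStep S x) \ (forgetStep S x')).card
        ≤ ({x} : Finset ℝ).card := Finset.card_le_card hsub
      _ ≤ 2 := by simp

lemma forgetMem_congr (xs ys : ℕ → ℝ) (n : ℕ) (h : ∀ k < n, xs k = ys k) :
    forgetMem {0} xs n = forgetMem {0} ys n := by
  induction n with
  | zero => rfl
  | succ n ih =>
    show forgetStep (forgetMem {0} xs n) (xs n)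
        = forgetStep (forgetMem {0} ys n) (ys n)
    rw [ih (fun k hk => h k (hk.trans (Nat.lt_succ_self n))),
      h n (Nat.lt_succ_self n)]

lemma key_sdiff_bound (xs ys : ℕ → ℝ) (i : ℕ)
    (hdiff : ∀ j, j ≠ i → xs j = ys j) (n : ℕ) :
    ((forgetMem {0} xs n) \ (forgetMem {0} ys n)).card ≤ 2 ∧
    ((forgetMem {0} ys n) \ (forgetMem {0} xs n)).card ≤ 2 := by
  induction n with
  | zero => simp [forgetMem]
  | succ n ih =>
    have hxs1 : forgetMem {0} xs (n + 1)
        = forgetStep (forgetMem {0} xs n) (xs n) := rfl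
    have hys1 : forgetMem {0} ys (n + 1)
        = forgetStep (forgetMem {0} ys n) (ys n) := rfl
    rcases lt_trichotomy n i with hn | hn | hn
    · have he : forgetMem {0} xs (n + 1) = forgetMem {0} ys (n + 1) :=
        forgetMem_congr xs ys (n + 1) (fun k hk => hdiff k (by omega))
      rw [he]
      simp
    · subst hn
      have he : forgetMem {0} xs n = forgetMem {0} ys n :=
        forgetMem_congr xs ys n (fun k hk => hdiff k (by omega))
      constructor
      · rw [hxs1, hys1, ← he]
        exact card_sdiff_forgetStep_same_le _ _ _
      · rw [hxs1, hys1, ← he]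
        exact card_sdiff_forgetStep_same_le _ _ _
    · have hxy : xs n = ys n := hdiff n (by omega)
      constructor
      · rw [hxs1, hys1, hxy]
        exact le_trans
          (card_sdiff_forgetStep_le _ _ (forgetMem_zero_nonempty xs n)
            (forgetMem_zero_nonempty ys n) (ys n)) ih.1
      · rw [hxs1, hys1, hxy]
        exact le_trans
          (card_sdiff_forgetStep_le _ _ (forgetMem_zero_nonempty ys n)
            (forgetMem_zero_nonempty xs n) (ys n)) ih.2

lemma abs_card_filter_sub_le (S T : Finset ℝ) (p : ℝ → Prop) [DecidablePred p]
    (h1 : (S \ T).card ≤ 2) (h2 : (T \ S).card ≤ 2) :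
    |((S.filter p).card : ℤ) - ((T.filter p).card : ℤ)| ≤ 2 := by
  have hSdec : (S.filter p).card
      = ((S \ T).filter p).card + ((S ∩ T).filter p).card := by
    rw [← Finset.card_union_of_disjoint
      (Finset.disjoint_filter_filter (Finset.disjoint_sdiff_inter S T)),
      ← Finset.filter_union, Finset.sdiff_union_inter]
  have hTdec : (T.filter p).card
      = ((T \ S).filter p).card + ((S ∩ T).filter p).card := by
    rw [Finset.inter_comm S T, ← Finset.card_union_of_disjoint
      (Finset.disjoint_filter_filter (Finset.disjoint_sdiff_inter T S)),
      ← Finset.filter_union, Finset.sdiff_union_inter]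
  have hA : ((S \ T).filter p).card ≤ 2 :=
    le_trans (Finset.card_filter_le _ _) h1
  have hB : ((T \ S).filter p).card ≤ 2 :=
    le_trans (Finset.card_filter_le _ _) h2
  rw [abs_le]
  constructor <;> [skip; skip] <;>
    · simp only [hSdec, hTdec]
      push_cast
      omega

end Aux

/-- The random variable `s(x,ℓ)` is a `2`-Lipschitz function of the input
sequence: changing the value of a single input point changes `s(x,ℓ)` by at most `2`. -/
theorem sCount_two_lipschitz (x : ℝ) (ℓ i : ℕ) (xs ys : ℕ → ℝ)
    (hxs : ∀ k, xs k ∈ Set.Icc (0 : ℝ) 1) (hys : ∀ k, ys k ∈ Set.Icc (0 : ℝ) 1)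
    (hdiff : ∀ j, j ≠ i → xs j = ys j) :
    |(sCount xs x ℓ : ℤ) - (sCount ys x ℓ : ℤ)| ≤ 2 := by
  obtain ⟨h1, h2⟩ := key_sdiff_bound xs ys i hdiff ℓ
  exact abs_card_filter_sub_le _ _ (· ≤ x) h1 h2
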